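/- Let T be a finite semigroup, S an ideal of T, and d ∈ ℕ such that every product of d elements of T lies in S (i.e., the Rees quotient T/S is d-nilpotent). Let n ∈ ℕ, let A be a finite subset of T^n, let b ∈ S^n, and let B := { a_1⋯a_ℓ : 1 ≤ ℓ < 2d, a_1,…,a_ℓ ∈ A } ∩ S^n. Then b belongs to the subsemigroup of T^n generated by A if and only if b belongs to the subsemigroup of S^n generated by B. -/

import Mathlib

/-- Product of a nonempty list of semigroup elements: `a * l₁ * l₂ * ⋯`. -/
def sgProd {S : Type*} [Semigroup S] (a : S) (l : List S) : S :=
  l.foldl (· * ·) a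

/-- `spow a m = a ^ m` for `m ≥ 1` (with junk value `a` at `m = 0`). -/
def spow {S : Type*} [Semigroup S] (a : S) : ℕ → S
  | 0 => a
  | 1 => a
  | (n + 2) => spow a (n + 1) * a

/-- A (two-sided) ideal of a semigroup: a nonempty subset absorbing
multiplication on both sides. -/
def IsIdeal {S : Type*} [Semigroup S] (I : Set S) : Prop :=
  I.Nonempty ∧ ∀ s : S, ∀ x ∈ I, s * x ∈ I ∧ x * s ∈ I

/-- A subset of a semigroup that is a subsemigroup which is a group. -/
def IsGroupSubset {S : Type*} [Semigroup S] (G : Set S) : Prop :=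
  (∀ x ∈ G, ∀ y ∈ G, x * y ∈ G) ∧
    ∃ e ∈ G, (∀ x ∈ G, e * x = x ∧ x * e = x) ∧
      ∀ x ∈ G, ∃ y ∈ G, x * y = e ∧ y * x = e

/-- A subset of a semigroup that is a Clifford semigroup in its own right:
it is closed under multiplication, completely regular (every element lies in a
subsemigroup which is a group), and its idempotents are central in it. -/
def IsCliffordSubset {S : Type*} [Semigroup S] (C : Set S) : Prop :=
  (∀ x ∈ C, ∀ y ∈ C, x * y ∈ C) ∧
    (∀ x ∈ C, ∃ G ⊆ C, IsGroupSubset G ∧ x ∈ G) ∧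
    (∀ e ∈ C, e * e = e → ∀ s ∈ C, e * s = s * e)

/-- A semigroup is a Clifford semigroup. -/
def IsCliffordSG (C : Type*) [Semigroup C] : Prop :=
  IsCliffordSubset (Set.univ : Set C)

/-- A semigroup is nilpotent: for some `d`, any two products of at least `d`
elements are equal. -/
def IsNilpotentSG (N : Type*) [Semigroup N] : Prop :=
  ∃ d : ℕ, ∀ (a b : N) (l l' : List N),
    d ≤ l.length + 1 → d ≤ l'.length + 1 → sgProd a l = sgProd b l'

lemma sgProd_cons' {S : Type*} [Semigroup S] (a y : S) (l : List S) :
    sgProd a (y :: l) = sgProd (a * y) l := rfl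

lemma mul_sgProd' {S : Type*} [Semigroup S] (l : List S) :
    ∀ x a : S, x * sgProd a l = sgProd (x * a) l := by
  induction l with
  | nil => intro x a; rfl
  | cons y l ih =>
    intro x a
    rw [sgProd_cons', sgProd_cons', ih, mul_assoc]

lemma sgProd_mul' {S : Type*} [Semigroup S] (a a' : S) (l l' : List S) :
    sgProd a l * sgProd a' l' = sgProd a (l ++ a' :: l') := by
  induction l generalizing a with
  | nil =>
    show a * sgProd a' l' = sgProd a (a' :: l')
    rw [sgProd_cons']
    exact mul_sgProd' l' a a'
  | cons y l ih =>
    rw [sgProd_cons', ih]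
    rfl

lemma sgProd_apply' {T : Type*} [Semigroup T] {n : ℕ} (l : List (Fin n → T)) :
    ∀ (a : Fin n → T) (i : Fin n),
      sgProd a l i = sgProd (a i) (l.map (fun f => f i)) := by
  induction l with
  | nil => intro a i; rfl
  | cons y l ih =>
    intro a i
    rw [sgProd_cons', ih]
    rfl

lemma sgProd_mem' {T : Type*} [Semigroup T] (M : Subsemigroup T) :
    ∀ (l : List T) (a : T), a ∈ M → (∀ y ∈ l, y ∈ M) → sgProd a l ∈ M := by
  intro l
  induction l with
  | nil => intro a ha _; exact ha
  | cons y l ih =>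
    intro a ha h
    rw [sgProd_cons']
    exact ih _ (M.mul_mem ha (h y List.mem_cons_self))
      (fun z hz => h z (List.mem_cons_of_mem _ hz))

lemma mem_closure_iff_sgProd' {T : Type*} [Semigroup T] (A : Set T) (x : T) :
    x ∈ Subsemigroup.closure A ↔
      ∃ a l, a ∈ A ∧ (∀ y ∈ l, y ∈ A) ∧ x = sgProd a l := by
  constructor
  · intro h
    induction h using Subsemigroup.closure_induction with
    | mem z hz => exact ⟨z, [], hz, by simp, rfl⟩
    | mul z w hz hw ihz ihw =>
      obtain ⟨a, l, ha, hl, rfl⟩ := ihz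
      obtain ⟨a', l', ha', hl', rfl⟩ := ihw
      refine ⟨a, l ++ a' :: l', ha, ?_, sgProd_mul' a a' l l'⟩
      intro y hy
      rcases List.mem_append.mp hy with h | h
      · exact hl y h
      · rcases List.mem_cons.mp h with rfl | h
        · exact ha'
        · exact hl' y h
  · rintro ⟨a, l, ha, hl, rfl⟩
    exact sgProd_mem' _ l a (Subsemigroup.subset_closure ha)
      (fun y hy => Subsemigroup.subset_closure (hl y hy))

lemma stmt14_key {T : Type*} [Semigroup T] (S : Set T) (d : ℕ) (hd1 : 1 ≤ d)
    (hd : ∀ (a : T) (l : List T), d ≤ l.length + 1 → sgProd a l ∈ S)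
    (n : ℕ) (A : Set (Fin n → T)) :
    ∀ (k : ℕ) (a : Fin n → T) (l : List (Fin n → T)),
      l.length = k → a ∈ A → (∀ y ∈ l, y ∈ A) → (∀ i, sgProd a l i ∈ S) →
      sgProd a l ∈ Subsemigroup.closure {x : Fin n → T |
        (∃ (a' : Fin n → T) (l' : List (Fin n → T)), a' ∈ A ∧ (∀ y ∈ l', y ∈ A) ∧
          l'.length + 1 < 2 * d ∧ x = sgProd a' l') ∧ ∀ i, x i ∈ S} := by
  intro k
  induction k using Nat.strong_induction_on with
  | _ k ih =>
    intro a l hk ha hl hbS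
    subst hk
    by_cases hlen : l.length + 1 < 2 * d
    · exact Subsemigroup.subset_closure ⟨⟨a, l, ha, hl, hlen, rfl⟩, hbS⟩
    · push_neg at hlen
      have hml : d - 1 ≤ l.length := by omega
      obtain ⟨c, l', hdrop⟩ : ∃ c l', l.drop (d - 1) = c :: l' := by
        cases hcase : l.drop (d - 1) with
        | nil =>
          exfalso
          have := congrArg List.length hcase
          simp [List.length_drop] at this
          omega
        | cons c l' => exact ⟨c, l', rfl⟩
      have hlenl' : l.length - (d - 1) = l'.length + 1 := by
        have := congrArg List.length hdrop
        simpa [List.length_drop] using this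
      have htake : (l.take (d - 1)).length = d - 1 := by
        simp [List.length_take]; omega
      have hsplit : sgProd a l = sgProd a (l.take (d - 1)) * sgProd c l' := by
        rw [sgProd_mul', ← hdrop, List.take_append_drop]
      have hcA : c ∈ A := by
        apply hl
        have : c ∈ l.drop (d - 1) := by rw [hdrop]; exact List.mem_cons_self
        exact List.mem_of_mem_drop this
      have hl'A : ∀ y ∈ l', y ∈ A := by
        intro y hy
        apply hl
        have : y ∈ l.drop (d - 1) := by rw [hdrop]; exact List.mem_cons_of_mem _ hy
        exact List.mem_of_mem_drop this
      have hfirstS : ∀ i, sgProd a (l.take (d - 1)) i ∈ S := by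
        intro i
        rw [sgProd_apply']
        apply hd
        simp [List.length_map, htake]; omega
      have hsecondS : ∀ i, sgProd c l' i ∈ S := by
        intro i
        rw [sgProd_apply']
        apply hd
        simp [List.length_map]; omega
      have hfirst : sgProd a (l.take (d - 1)) ∈ Subsemigroup.closure
          {x : Fin n → T |
            (∃ (a' : Fin n → T) (l' : List (Fin n → T)), a' ∈ A ∧
              (∀ y ∈ l', y ∈ A) ∧ l'.length + 1 < 2 * d ∧ x = sgProd a' l') ∧
            ∀ i, x i ∈ S} := by
        apply Subsemigroup.subset_closure
        refine ⟨⟨a, l.take (d - 1), ha, ?_, by omega, rfl⟩, hfirstS⟩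
        intro y hy
        exact hl y (List.mem_of_mem_take hy)
      have hsecond := ih l'.length (by omega) c l' rfl hcA hl'A hsecondS
      rw [hsplit]
      exact Subsemigroup.mul_mem _ hfirst hsecond

/-- Let `S` be an ideal of a finite semigroup `T` such that every
product of `d` (hence of at least `d`) elements of `T` lies in `S` (`d ≥ 1`).
For a finite `A ⊆ Tⁿ`, `b ∈ Sⁿ`, and
`B := { a₁⋯a_ℓ | 1 ≤ ℓ < 2d, a₁, …, a_ℓ ∈ A } ∩ Sⁿ`, we have
`b ∈ ⟨A⟩` iff `b ∈ ⟨B⟩`. -/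
theorem stmt14 {T : Type*} [Semigroup T] [Finite T] [Nonempty T]
    (S : Set T) (hS : IsIdeal S) (d : ℕ) (hd1 : 1 ≤ d)
    (hd : ∀ (a : T) (l : List T), d ≤ l.length + 1 → sgProd a l ∈ S)
    (n : ℕ) (A : Set (Fin n → T)) (hA : A.Finite)
    (b : Fin n → T) (hb : ∀ i, b i ∈ S) :
    b ∈ Subsemigroup.closure A ↔
      b ∈ Subsemigroup.closure {x : Fin n → T |
        (∃ (a : Fin n → T) (l : List (Fin n → T)), a ∈ A ∧ (∀ y ∈ l, y ∈ A) ∧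
          l.length + 1 < 2 * d ∧ x = sgProd a l) ∧ ∀ i, x i ∈ S} := by
  constructor
  · intro h
    obtain ⟨a, l, ha, hl, rfl⟩ := (mem_closure_iff_sgProd' A b).mp h
    exact stmt14_key S d hd1 hd n A l.length a l rfl ha hl hb
  · intro h
    refine Subsemigroup.closure_le.mpr ?_ h
    rintro x ⟨⟨a, l, ha, hl, _, rfl⟩, _⟩
    exact sgProd_mem' _ l a (Subsemigroup.subset_closure ha)
      (fun y hy => Subsemigroup.subset_closure (hl y hy))
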